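/- Fix nodes i, j ∈ Fin n. There exists a map g : Fin h → Fin n with g w ∈ H i w for all w such that ∑_{w : g w = j} μ w = ℓ_{i,j}. (Tightness of the lower bound in Theorem 1: some path-wise feasible deterministic update rule at node i attains transition probability ℓ_{i,j} to node j.) -/
import Mathlib

/-- Tightness of the lower bound in Theorem 1: some path-wise feasible
deterministic update rule at node `i` attains transition probability
`ℓ i j = ∑_{w : H i w = {j}} μ w` to node `j`. -/
theorem lower_bound_tight
    (n h : ℕ) (hn : 1 ≤ n) (hh : 1 ≤ h)
    (H : Fin n → Fin h → Finset (Fin n))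
    (hne : ∀ i w, (H i w).Nonempty)
    (μ : Fin h → ℝ) (hμ0 : ∀ w, 0 ≤ μ w) (hμ1 : ∑ w, μ w = 1)
    (i j : Fin n) :
    ∃ g : Fin h → Fin n, (∀ w, g w ∈ H i w) ∧
      ∑ w ∈ Finset.univ.filter (fun w => g w = j), μ w
        = ∑ w ∈ Finset.univ.filter (fun w => H i w = {j}), μ w := by
  have key : ∀ w, ∃ x, x ∈ H i w ∧ (x = j ↔ H i w = {j}) := by
    intro w
    by_cases hw : H i w = {j}
    · exact ⟨j, by simp [hw], by simp [hw]⟩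
    · have : ∃ x ∈ H i w, x ≠ j := by
        by_contra hc
        push_neg at hc
        apply hw
        apply Finset.Subset.antisymm
        · intro x hx; simp [hc x hx]
        · intro x hx
          simp only [Finset.mem_singleton] at hx
          obtain ⟨y, hy⟩ := hne i w
          have := hc y hy
          subst this; subst hx; exact hy
      obtain ⟨x, hx, hxj⟩ := this
      exact ⟨x, hx, by simp [hxj, hw]⟩
  choose g hg1 hg2 using key
  refine ⟨g, hg1, ?_⟩
  congr 1
  ext w
  simp [hg2 w]
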